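/- Let L be a finite lattice that is not relatively complemented, i.e., there exist x < y in L such that exactly one element z satisfies x < z < y. Then there exists a family F ⊆ L that shatters strictly fewer than |F| elements. -/

import Mathlib

open scoped Classical

/-- `F` shatters `z`: for every `x ≤ z` there is `w ∈ F` with `w ⊓ z = x`. -/
def Shatters {L : Type*} [SemilatticeInf L] (F : Set L) (z : L) : Prop :=
  ∀ x ≤ z, ∃ w ∈ F, w ⊓ z = x

/-- The set of elements shattered by `F`. -/
def Str {L : Type*} [SemilatticeInf L] (F : Set L) : Set L := {z | Shatters F z}

/-- A finite lattice that is not relatively complemented (it has a 3-element interval)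
has a family shattering strictly fewer elements than its cardinality. -/
theorem not_ssp_of_not_rc {L : Type*} [Lattice L] [Fintype L]
    (h : ∃ x y : L, x < y ∧ ∃! z : L, x < z ∧ z < y) :
    ∃ F : Set L, (Str F).ncard < F.ncard := by
  obtain ⟨x, y, hxy, z, ⟨hxz, hzy⟩, huniq⟩ := h
  classical
  -- the ideal below y
  set I : Set L := {w | w ≤ y} with hI
  -- the family: the ideal minus x
  refine ⟨I \ {x}, ?_⟩
  have hzI : z ∈ I := hzy.le
  have hyI : y ∈ I := le_refl y
  have hxI : x ∈ I := hxy.le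
  have hzy' : z ≠ y := hzy.ne
  -- every shattered element lies in I
  have hsub : Str (I \ {x}) ⊆ I \ {z, y} := by
    intro u hu
    have hu' : Shatters (I \ {x}) u := hu
    -- u ≤ y
    obtain ⟨w, hwF, hwu⟩ := hu' u le_rfl
    have huy : u ≤ y := by
      have : u ≤ w := by rw [← hwu]; exact inf_le_left
      exact this.trans hwF.1
    refine ⟨huy, ?_⟩
    intro hmem
    rcases hmem with hz | hy
    · -- u = z is not shattered: witness x
      subst hz
      obtain ⟨w, ⟨hwy, hwx⟩, hw⟩ := hu' x hxz.le
      have hxw : x ≤ w := by rw [← hw]; exact inf_le_left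
      have hxw' : x < w := lt_of_le_of_ne hxw (fun e => hwx e.symm)
      rcases eq_or_lt_of_le hwy with hwy' | hwy'
      · -- w = y : then w ⊓ z = z
        rw [hwy', inf_eq_right.mpr hzy.le] at hw
        exact absurd hw.symm hxz.ne
      · -- x < w < y : then w = z, so w ⊓ z = z
        have := huniq w ⟨hxw', hwy'⟩
        rw [this, inf_idem] at hw
        exact absurd hw.symm hxz.ne
    · -- u = y is not shattered: witness x
      subst hy
      obtain ⟨w, ⟨hwy, hwx⟩, hw⟩ := hu' x hxy.le
      have : w ⊓ u = w := inf_eq_left.mpr hwy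
      rw [this] at hw
      exact hwx hw
  -- counting
  have hfinI : I.Finite := Set.toFinite I
  have h1 : ({z, y} : Set L) ⊆ I := by
    intro a ha; rcases ha with rfl | rfl
    · exact hzI
    · exact hyI
  have h2 : ({x} : Set L) ⊆ I := by simp [hxI]
  have hpair : ({z, y} : Set L).ncard = 2 := Set.ncard_pair hzy'
  have hd1 : (I \ {z, y}).ncard = I.ncard - 2 := by
    rw [Set.ncard_diff h1 (Set.toFinite _), hpair]
  have hd2 : (I \ {x}).ncard = I.ncard - 1 := by
    rw [Set.ncard_diff h2 (Set.toFinite _), Set.ncard_singleton]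
  have hge : 2 ≤ I.ncard := by
    have := Set.ncard_le_ncard h1 hfinI
    omega
  have hle : (Str (I \ {x})).ncard ≤ (I \ {z, y}).ncard :=
    Set.ncard_le_ncard hsub hfinI.diff
  omega
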